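/- Let G=(V,A) be a finite undirected graph, let B, D, E be subsets of V, and let M be a minimal separator between B and D given E. Then the following two conditions are equivalent: (i) for every separator M' between B and D given E, D is separated from M given M' ∪ E; (ii) for every minimal separator M' between B and D given E, B is separated from M' given M ∪ E. -/

import Mathlib

/-- `USep G X Y M` : every path (walk) between a vertex of `X` and a vertex of `Y`
contains a vertex of `M`, i.e. `M` separates `X` and `Y` in the undirected graph `G`. -/
def USep {V : Type*} (G : SimpleGraph V) (X Y M : Set V) : Prop :=
  ∀ ⦃u : V⦄, u ∈ X → ∀ ⦃v : V⦄, v ∈ Y → ∀ p : G.Walk u v, ∃ w ∈ p.support, w ∈ M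

/-- `Mb G B C E` : the Markov blanket of `B` in `C` given `E`, defined as
`{v ∈ C : v is not separated from B given E ∪ (C \ (B ∪ {v}))}`. -/
def Mb {V : Type*} (G : SimpleGraph V) (B C E : Set V) : Set V :=
  {v | v ∈ C ∧ ¬ USep G {v} B (E ∪ (C \ (B ∪ {v})))}

/-- `M` is a separator between `B` and `D` given the evidence set `E`. -/
def IsSep {V : Type*} (G : SimpleGraph V) (B D E M : Set V) : Prop :=
  USep G B D (M ∪ E)

/-- `M` is a minimal separator between `B` and `D` given the evidence set `E`. -/
def IsMinSep {V : Type*} (G : SimpleGraph V) (B D E M : Set V) : Prop :=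
  IsSep G B D E M ∧ ∀ M' ⊂ M, ¬ IsSep G B D E M'

open SimpleGraph Walk

/-- If the endpoint `c` occurs exactly once in a walk's support and `w ≠ c`,
then `c` is not in the support of the prefix up to `w`. -/
lemma aux_key {V : Type*} [DecidableEq V] {G : SimpleGraph V} {a c : V} (p : G.Walk a c)
    (h1 : p.support.count c = 1) {w : V} (hw : w ∈ p.support) (hwc : w ≠ c) :
    c ∉ (p.takeUntil w hw).support := by
  intro hcu
  have hspec : p.support = (p.takeUntil w hw).support ++ (p.dropUntil w hw).support.tail := by
    conv_lhs => rw [← p.take_spec hw]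
    exact Walk.support_append _ _
  have hcend : c ∈ (p.dropUntil w hw).support := Walk.end_mem_support _
  rw [(p.dropUntil w hw).support_eq_cons] at hcend
  rcases List.mem_cons.mp hcend with h | h
  · exact hwc h.symm
  · have c1 : 0 < (p.takeUntil w hw).support.count c := List.count_pos_iff.mpr hcu
    have c2 : 0 < (p.dropUntil w hw).support.tail.count c := List.count_pos_iff.mpr h
    rw [hspec, List.count_append] at h1
    omega

lemma usep_comm {V : Type*} {G : SimpleGraph V} {X Y M : Set V} (h : USep G X Y M) :
    USep G Y X M := by
  intro u hu v hv p
  obtain ⟨w, hw, hwM⟩ := h hv hu p.reverse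
  exact ⟨w, by simpa [Walk.support_reverse] using hw, hwM⟩

lemma isMinSep_comm {V : Type*} {G : SimpleGraph V} {B D E M : Set V}
    (h : IsMinSep G B D E M) : IsMinSep G D B E M :=
  ⟨usep_comm h.1, fun M' hM' hsep => h.2 M' hM' (usep_comm hsep)⟩

/-- Every separator contains a minimal separator (finite vertex set). -/
lemma exists_minSep_subset {V : Type*} [Fintype V] {G : SimpleGraph V} {B D E : Set V} :
    ∀ n (M' : Set V), M'.ncard ≤ n → IsSep G B D E M' →
      ∃ M₀ ⊆ M', IsMinSep G B D E M₀ := by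
  intro n
  induction n with
  | zero =>
      intro M' hn h
      refine ⟨M', subset_rfl, h, fun S hS hsep => absurd hS.1 ?_⟩
      intro hle
      have : M' = ∅ := Set.ncard_eq_zero (Set.toFinite M') |>.mp (Nat.le_zero.mp hn)
      subst this
      exact hS.2 (Set.subset_empty_iff.mp hle ▸ subset_rfl)
  | succ n ih =>
      intro M' hn h
      by_cases hall : ∀ S, S ⊂ M' → ¬ IsSep G B D E S
      · exact ⟨M', subset_rfl, h, hall⟩
      · push_neg at hall
        obtain ⟨S, hSsub, hSsep⟩ := hall
        have hlt : S.ncard < M'.ncard := Set.ncard_lt_ncard hSsub (Set.toFinite M')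
        obtain ⟨M₀, hsub, hmin⟩ := ih S (by omega) hSsep
        exact ⟨M₀, hsub.trans hSsub.1, hmin⟩

/-- From minimality: each vertex `m` of a minimal separator is reachable from `B`
by a walk hitting `M ∪ E` only at `m`, with `m` appearing exactly once (at the end). -/
lemma minSep_walk {V : Type*} [DecidableEq V] {G : SimpleGraph V} {B D E M : Set V}
    (hM : IsMinSep G B D E M) {m : V} (hm : m ∈ M) :
    ∃ b ∈ B, ∃ p : G.Walk b m, p.support.count m = 1 ∧
      ∀ w ∈ p.support, w ∈ M ∪ E → w = m := by
  have hss : M \ {m} ⊂ M := Set.sdiff_singleton_ssubset.mpr hm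
  have h2 := hM.2 (M \ {m}) hss
  unfold IsSep USep at h2
  push_neg at h2
  obtain ⟨b, hb, d, hd, r, hr⟩ := h2
  have havoid : ∀ w ∈ r.support, w ∈ M ∪ E → w = m := by
    intro w hw hwME
    have := hr w hw
    rcases hwME with hwM | hwE
    · by_contra hne
      exact this (Or.inl ⟨hwM, hne⟩)
    · exact absurd (Or.inr hwE) this
  obtain ⟨w, hw, hwME⟩ := hM.1 hb hd r
  have hwm : w = m := havoid w hw hwME
  subst hwm
  refine ⟨b, hb, r.takeUntil w hw, r.count_support_takeUntil_eq_one hw, ?_⟩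
  intro x hx hxME
  exact havoid x (Walk.support_takeUntil_subset r hw hx) hxME

theorem stmt_4 {V : Type*} [Fintype V] (G : SimpleGraph V) (B D E M : Set V)
    (hM : IsMinSep G B D E M) :
    (∀ M', IsSep G B D E M' → USep G D M (M' ∪ E)) ↔
      (∀ M', IsMinSep G B D E M' → USep G B M' (M ∪ E)) := by
  classical
  constructor
  · -- (i) → (ii)
    intro h M' hM' b hb v hv p
    by_contra hc
    push_neg at hc
    -- hc : ∀ w ∈ p.support, w ∉ M ∪ E
    -- get a walk from v to D (minimality of M' on the D side)
    obtain ⟨d, hd, s, hcount, hhits⟩ := minSep_walk (isMinSep_comm hM') hv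
    -- s : G.Walk d v, v counted once, hits M' ∪ E only at v
    -- concatenate p : b → v with s.reverse : v → d
    obtain ⟨w, hw, hwME⟩ := hM.1 hb hd (p.append s.reverse)
    rw [Walk.support_append, List.mem_append] at hw
    rcases hw with hw | hw
    · exact hc w hw hwME
    have hws : w ∈ s.support := by
      have : w ∈ s.reverse.support := List.mem_of_mem_tail hw
      simpa [Walk.support_reverse] using this
    -- w ∈ M (not in E)
    have hwM : w ∈ M := by
      rcases hwME with hwM | hwE
      · exact hwM
      · have := hhits w hws (Or.inr hwE)
        subst this
        exact absurd (Or.inr hwE) (hc w (Walk.end_mem_support p))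
    have hwv : w ≠ v := by
      intro hwv; subst hwv
      exact hc w (Walk.end_mem_support p) (Or.inl hwM)
    -- walk from d to w ∈ M must hit M' ∪ E by (i)
    obtain ⟨x, hx, hxME⟩ := h M' hM'.1 hd hwM (s.takeUntil w hws)
    have hxv : x = v := hhits x (Walk.support_takeUntil_subset s hws hx) hxME
    subst hxv
    exact aux_key s hcount hws hwv hx
  · -- (ii) → (i)
    intro h M' hM' d hd m hm q
    by_contra hc
    push_neg at hc
    -- hc : ∀ w ∈ q.support, w ∉ M' ∪ E
    obtain ⟨M₀, hsub, hmin⟩ := exists_minSep_subset (Fintype.card V) M'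
      (Set.ncard_le_ncard (Set.subset_univ M') (Set.toFinite _) |>.trans
        (by simp [Set.ncard_univ])) hM'
    have hcq : ∀ w ∈ q.support, w ∉ M₀ ∪ E := fun w hw hwME =>
      hc w hw (hwME.imp (fun h => hsub h) id)
    obtain ⟨b, hb, p, hcount, hhits⟩ := minSep_walk hM hm
    -- p : G.Walk b m; concatenate with q.reverse : m → d
    obtain ⟨w, hw, hwME⟩ := hmin.1 hb hd (p.append q.reverse)
    rw [Walk.support_append, List.mem_append] at hw
    rcases hw with hw | hw
    · -- w ∈ p.support
      have hwM₀ : w ∈ M₀ := by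
        rcases hwME with hwM₀ | hwE
        · exact hwM₀
        · have := hhits w hw (Or.inr hwE)
          subst this
          exact absurd (Or.inr hwE) (hc w (Walk.end_mem_support q))
      have hwm : w ≠ m := by
        intro hwm; subst hwm
        exact hcq w (Walk.end_mem_support q) (Or.inl hwM₀)
      obtain ⟨x, hx, hxME⟩ := h M₀ hmin hb hwM₀ (p.takeUntil w hw)
      have hxm : x = m := hhits x (Walk.support_takeUntil_subset p hw hx) hxME
      subst hxm
      exact aux_key p hcount hw hwm hx
    · have : w ∈ q.support := by
        have : w ∈ q.reverse.support := List.mem_of_mem_tail hw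
        simpa [Walk.support_reverse] using this
      exact hcq w this hwME
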